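/- An undecomposable quasi-parabolic rank-2 bundle (E, l) of degree d over P^1 with n marked points is w-stable for some choice of weights w ∈ [0,1]^n. -/

import Mathlib

/-!
Model of rank-2 bundles on `P¹`: `E = O(d1) ⊕ O(d2)`, marked points in the
affine chart.  Bundle maps `O(e) → E` are pairs of polynomials with degree
bounds; line subbundles of degree `e` are such pairs with no common zero (also
at `∞`, which is encoded by saturation of the degree bounds).
-/

/-- `degLE f m`: `f` defines a section of `O(m)` on `P¹`, i.e. `deg f ≤ m`. -/
def degLE (f : Polynomial ℂ) (m : ℤ) : Prop :=
  ∀ k : ℕ, m < (k : ℤ) → f.coeff k = 0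

/-- The fiber at `z` of the line subbundle of `O(d1) ⊕ O(d2)` given by `(f, g)`. -/
noncomputable def fiber (f g : Polynomial ℂ) (z : ℂ) : Submodule ℂ (Fin 2 → ℂ) :=
  Submodule.span ℂ {![f.eval z, g.eval z]}

/-- Decomposability of a quasi-parabolic structure on `O(d1) ⊕ O(d2)`. -/
def Decomposable (d1 d2 : ℤ) {n : ℕ} (t : Fin n → ℂ)
    (l : Fin n → Submodule ℂ (Fin 2 → ℂ)) : Prop :=
  ∃ (e1 e2 : ℤ) (f1 g1 f2 g2 : Polynomial ℂ),
    e1 + e2 = d1 + d2 ∧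
    degLE f1 (d1 - e1) ∧ degLE g1 (d2 - e1) ∧
    degLE f2 (d1 - e2) ∧ degLE g2 (d2 - e2) ∧
    (∃ c : ℂ, c ≠ 0 ∧ f1 * g2 - g1 * f2 = Polynomial.C c) ∧
    ∀ i, l i = fiber f1 g1 (t i) ∨ l i = fiber f2 g2 (t i)

/-- A line subbundle `O(e) ↪ O(d1) ⊕ O(d2)`: a nowhere-vanishing pair of
polynomials with the degree bounds of a map `O(e) → E`, saturated (no common
zero at `∞` either). -/
structure LineSub (d1 d2 : ℤ) : Type where
  e : ℤ
  f : Polynomial ℂ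
  g : Polynomial ℂ
  hf : degLE f (d1 - e)
  hg : degLE g (d2 - e)
  nz : ∀ z : ℂ, f.eval z ≠ 0 ∨ g.eval z ≠ 0
  sat : ¬ (degLE f (d1 - e - 1) ∧ degLE g (d2 - e - 1))

open scoped Classical in
/-- The stability index
`Stab(F) = deg E - 2 deg F + Σ_{lᵢ ⊄ F} wᵢ - Σ_{lᵢ ⊂ F} wᵢ`. -/
noncomputable def Stab (d1 d2 : ℤ) {n : ℕ} (t : Fin n → ℂ)
    (l : Fin n → Submodule ℂ (Fin 2 → ℂ)) (w : Fin n → ℝ)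
    (F : LineSub d1 d2) : ℝ :=
  ((d1 + d2 : ℤ) : ℝ) - 2 * (F.e : ℝ)
    + ∑ i, (if l i = fiber F.f F.g (t i) then -(w i) else w i)

section AuxStmt2
set_option maxHeartbeats 2000000

open Polynomial Finset
open scoped Classical

lemma degLE_mono {f : Polynomial ℂ} {m m' : ℤ} (h : degLE f m) (hm : m ≤ m') : degLE f m' :=
  fun k hk => h k (lt_of_le_of_lt hm hk)

lemma degLE_zero (m : ℤ) : degLE 0 m := fun k _ => by simp

lemma degLE_C (a : ℂ) : degLE (C a) 0 := by
  intro k hk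
  rw [coeff_C, if_neg (by omega)]

lemma degLE_add {f g : Polynomial ℂ} {m : ℤ} (hf : degLE f m) (hg : degLE g m) :
    degLE (f + g) m := by
  intro k hk; rw [coeff_add, hf k hk, hg k hk, add_zero]

lemma degLE_neg {f : Polynomial ℂ} {m : ℤ} (hf : degLE f m) : degLE (-f) m := by
  intro k hk; rw [coeff_neg, hf k hk, neg_zero]

lemma degLE_sub {f g : Polynomial ℂ} {m : ℤ} (hf : degLE f m) (hg : degLE g m) :
    degLE (f - g) m := by
  rw [sub_eq_add_neg]; exact degLE_add hf (degLE_neg hg)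

lemma degLE_mul {f g : Polynomial ℂ} {m m' : ℤ} (hf : degLE f m) (hg : degLE g m') :
    degLE (f * g) (m + m') := by
  intro k hk
  rw [coeff_mul]
  apply Finset.sum_eq_zero
  rintro ⟨i, j⟩ hij
  rw [Finset.HasAntidiagonal.mem_antidiagonal] at hij
  have hij' : (i : ℤ) + (j : ℤ) = (k : ℤ) := by exact_mod_cast congrArg (Nat.cast : ℕ → ℤ) hij
  by_cases hi : m < (i : ℤ)
  · rw [hf i hi, zero_mul]
  · have : m' < (j : ℤ) := by omega
    rw [hg j this, mul_zero]

lemma degLE_C_mul {f : Polynomial ℂ} {m : ℤ} (a : ℂ) (hf : degLE f m) :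
    degLE (C a * f) m := by
  have := degLE_mul (degLE_C a) hf
  rwa [zero_add] at this

lemma degLE_X_sub_C (a : ℂ) : degLE (X - C a) 1 := by
  intro k hk
  rw [coeff_sub, coeff_X, coeff_C, if_neg (by omega), if_neg (by omega), sub_zero]

lemma degLE_natDegree {f : Polynomial ℂ} {m : ℤ} (hf : degLE f m) (h0 : f ≠ 0) :
    (f.natDegree : ℤ) ≤ m := by
  by_contra h
  exact (Polynomial.leadingCoeff_ne_zero.mpr h0) (hf f.natDegree (by omega))

lemma degLE_prod {n : ℕ} (t : Fin n → ℂ) (S : Finset (Fin n)) :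
    degLE (∏ j ∈ S, (X - C (t j))) (S.card : ℤ) := by
  induction S using Finset.induction_on with
  | empty =>
      intro k hk
      rw [Finset.prod_empty, Polynomial.coeff_one, if_neg (by omega)]
  | insert a s hx ih =>
      rw [Finset.prod_insert hx, Finset.card_insert_of_notMem hx]
      have := degLE_mul (degLE_X_sub_C (t a)) ih
      apply degLE_mono this
      push_cast; omega

lemma vec_pair_eta (x : Fin 2 → ℂ) : x = ![x 0, x 1] := by
  funext i
  fin_cases i <;> simp

lemma vec_pair_zero {x : Fin 2 → ℂ} (h0 : x 0 = 0) (h1 : x 1 = 0) : x = 0 := by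
  rw [vec_pair_eta x, h0, h1]
  funext i; fin_cases i <;> simp

lemma span_smul_eq {a : ℂ} (ha : a ≠ 0) (x : Fin 2 → ℂ) :
    Submodule.span ℂ {a • x} = Submodule.span ℂ {x} :=
  Submodule.span_singleton_smul_eq (isUnit_iff_ne_zero.mpr ha) x

lemma exists_smul_of_span_eq {x y : Fin 2 → ℂ}
    (h : Submodule.span ℂ {x} = Submodule.span ℂ {y}) : ∃ a : ℂ, x = a • y := by
  have hx : x ∈ Submodule.span ℂ {y} := h ▸ Submodule.mem_span_singleton_self x
  obtain ⟨a, ha⟩ := Submodule.mem_span_singleton.mp hx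
  exact ⟨a, ha.symm⟩

lemma exists_gen (p : Submodule ℂ (Fin 2 → ℂ)) (hp : Module.finrank ℂ p = 1) :
    ∃ x : Fin 2 → ℂ, x ≠ 0 ∧ p = Submodule.span ℂ {x} := by
  obtain ⟨v, hv0, hv⟩ := finrank_eq_one_iff'.mp hp
  refine ⟨(v : Fin 2 → ℂ), by simpa using hv0, ?_⟩
  apply le_antisymm
  · intro y hy
    obtain ⟨cc, hcc⟩ := hv ⟨y, hy⟩
    rw [Submodule.mem_span_singleton]
    exact ⟨cc, congrArg Subtype.val hcc⟩
  · rw [Submodule.span_le, Set.singleton_subset_iff]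
    exact v.2

/-- Fibers of a nondegenerate pair are distinct. -/
lemma fiber_ne_fiber {f1 g1 f2 g2 : Polynomial ℂ} {z : ℂ}
    (hd : f1.eval z * g2.eval z - g1.eval z * f2.eval z ≠ 0) :
    fiber f1 g1 z ≠ fiber f2 g2 z := by
  intro h
  obtain ⟨a, ha⟩ := exists_smul_of_span_eq h.symm
  have h0 : f2.eval z = a * f1.eval z := by
    have := congrFun ha 0; simpa using this
  have h1 : g2.eval z = a * g1.eval z := by
    have := congrFun ha 1; simpa using this
  apply hd
  rw [h0, h1]; ring

lemma decomposable_of_small {n : ℕ} (d1 d2 : ℤ) (t : Fin n → ℂ) (ht : Function.Injective t)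
    (l : Fin n → Submodule ℂ (Fin 2 → ℂ)) (i0 : Fin n)
    (x : Fin 2 → ℂ) (hx : x ≠ 0) (hlx : l i0 = Submodule.span ℂ {x})
    (e1 e2 : ℤ) (f1 g1 f2 g2 : Polynomial ℂ) (c : ℂ)
    (he : e1 + e2 = d1 + d2)
    (h11 : degLE f1 (d1 - e1)) (h12 : degLE g1 (d2 - e1))
    (h21 : degLE f2 (d1 - e2)) (h22 : degLE g2 (d2 - e2))
    (hc : c ≠ 0) (hdet : f1 * g2 - g1 * f2 = Polynomial.C c)
    (hcov : ∀ j, j ≠ i0 → l j = fiber f1 g1 (t j) ∨ l j = fiber f2 g2 (t j))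
    (hi1 : l i0 ≠ fiber f1 g1 (t i0)) (hi2 : l i0 ≠ fiber f2 g2 (t i0))
    (hsmall : (((Finset.univ : Finset (Fin n)).filter
        (fun j => l j = fiber f1 g1 (t j))).card : ℤ) ≤ e2 - e1) :
    Decomposable d1 d2 t l := by
  set z0 := t i0 with hz0
  have hdetz : f1.eval z0 * g2.eval z0 - g1.eval z0 * f2.eval z0 = c := by
    have := congrArg (Polynomial.eval z0) hdet
    simpa using this
  set A := (Finset.univ : Finset (Fin n)).filter (fun j => l j = fiber f1 g1 (t j)) with hA
  have hi0A : i0 ∉ A := by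
    intro h
    exact hi1 (by simpa [hA] using h)
  set β : Polynomial ℂ := ∏ j ∈ A, (X - C (t j)) with hβ
  have hβz0 : β.eval z0 ≠ 0 := by
    rw [hβ, Polynomial.eval_prod]
    apply Finset.prod_ne_zero_iff.mpr
    intro j hj
    simp only [Polynomial.eval_sub, Polynomial.eval_X, Polynomial.eval_C, sub_ne_zero]
    intro hEq
    exact hi0A (by rwa [ht hEq.symm] at hj)
  set lam : ℂ := (x 0 * g2.eval z0 - x 1 * f2.eval z0) / c with hlam
  set mu : ℂ := (x 1 * f1.eval z0 - x 0 * g1.eval z0) / c with hmu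
  have hx0 : lam * f1.eval z0 + mu * f2.eval z0 = x 0 := by
    rw [hlam, hmu]
    field_simp
    linear_combination (x 0) * hdetz
  have hx1 : lam * g1.eval z0 + mu * g2.eval z0 = x 1 := by
    rw [hlam, hmu]
    field_simp
    linear_combination (x 1) * hdetz
  have hlam0 : lam ≠ 0 := by
    intro h0
    have hmu0 : mu ≠ 0 := by
      intro h0'
      apply hx
      apply vec_pair_zero <;> simp [← hx0, ← hx1, h0, h0']
    apply hi2
    rw [hlx]
    have : x = mu • ![f2.eval z0, g2.eval z0] := by
      funext i
      fin_cases i <;> simp [← hx0, ← hx1, h0]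
    rw [this, fiber, hz0]
    exact span_smul_eq hmu0 _
  have hmu0 : mu ≠ 0 := by
    intro h0'
    apply hi1
    rw [hlx]
    have : x = lam • ![f1.eval z0, g1.eval z0] := by
      funext i
      fin_cases i <;> simp [← hx0, ← hx1, h0']
    rw [this, fiber, hz0]
    exact span_smul_eq hlam0 _
  set mu' : ℂ := mu / β.eval z0 with hmu'
  set H1 : Polynomial ℂ := C lam * f1 + (C mu' * β) * f2 with hH1
  set H2 : Polynomial ℂ := C lam * g1 + (C mu' * β) * g2 with hH2
  have hdegβ : degLE β (A.card : ℤ) := hβ ▸ degLE_prod t A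
  have hdegH1 : degLE H1 (d1 - e1) := by
    apply degLE_add (degLE_C_mul _ h11)
    have h := degLE_mul (degLE_C_mul mu' hdegβ) h21
    exact degLE_mono h (by omega)
  have hdegH2 : degLE H2 (d2 - e1) := by
    apply degLE_add (degLE_C_mul _ h12)
    have h := degLE_mul (degLE_C_mul mu' hdegβ) h22
    exact degLE_mono h (by omega)
  refine ⟨e1, e2, H1, H2, f2, g2, he, hdegH1, hdegH2, h21, h22,
    ⟨lam * c, mul_ne_zero hlam0 hc, ?_⟩, ?_⟩
  · rw [Polynomial.C_mul, hH1, hH2]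
    linear_combination (C lam) * hdet
  · intro j
    by_cases hj0 : j = i0
    · left
      subst hj0
      rw [hlx, fiber]
      have hv : ![H1.eval (t j), H2.eval (t j)] = x := by
        funext i
        have hb : mu' * β.eval z0 = mu := by
          rw [hmu']; field_simp
        fin_cases i <;>
          simp [hH1, hH2, ← hz0, hb, ← hx0, ← hx1] <;> ring
      rw [hv]
    · by_cases hjA : j ∈ A
      · left
        have hlj : l j = fiber f1 g1 (t j) := by simpa [hA] using hjA
        have hβj : β.eval (t j) = 0 := by
          rw [hβ, Polynomial.eval_prod]
          exact Finset.prod_eq_zero hjA (by simp)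
        have hv : ![H1.eval (t j), H2.eval (t j)] =
            lam • ![f1.eval (t j), g1.eval (t j)] := by
          funext i
          fin_cases i <;> simp [hH1, hH2, hβj]
        rw [hlj, fiber, fiber, hv, span_smul_eq hlam0]
      · right
        rcases hcov j hj0 with h | h
        · exact absurd (by simpa [hA] using h : j ∈ A) hjA
        · exact h

lemma card_filter_le_deg {n : ℕ} {t : Fin n → ℂ} (ht : Function.Injective t)
    (S : Finset (Fin n)) {β : Polynomial ℂ} {b : ℤ} (hβd : degLE β b) (hβ0 : β ≠ 0)
    (hroot : ∀ j ∈ S, β.eval (t j) = 0) : (S.card : ℤ) ≤ b := by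
  have h1 : S.card = (S.image t).card := (Finset.card_image_of_injective S ht).symm
  have h2 : S.image t ⊆ β.roots.toFinset := by
    intro z hz
    obtain ⟨j, hj, rfl⟩ := Finset.mem_image.mp hz
    rw [Multiset.mem_toFinset, Polynomial.mem_roots']
    exact ⟨hβ0, by simpa [Polynomial.IsRoot] using hroot j hj⟩
  have h3 : (S.image t).card ≤ β.roots.toFinset.card := Finset.card_le_card h2
  have h4 : β.roots.toFinset.card ≤ Multiset.card β.roots := Multiset.toFinset_card_le _
  have h5 := Polynomial.card_roots' β
  have h6 : (S.card : ℤ) ≤ (β.natDegree : ℤ) := by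
    rw [h1]; exact_mod_cast le_trans h3 (le_trans h4 h5)
  exact le_trans h6 (degLE_natDegree hβd hβ0)

lemma main_stab {n : ℕ} (d1 d2 : ℤ) (t : Fin n → ℂ) (ht : Function.Injective t)
    (l : Fin n → Submodule ℂ (Fin 2 → ℂ)) (hl : ∀ i, Module.finrank ℂ (l i) = 1)
    (hund : ¬ Decomposable d1 d2 t l) (i0 : Fin n)
    (e1 e2 : ℤ) (f1 g1 f2 g2 : Polynomial ℂ) (c : ℂ)
    (he : e1 + e2 = d1 + d2)
    (h11 : degLE f1 (d1 - e1)) (h12 : degLE g1 (d2 - e1))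
    (h21 : degLE f2 (d1 - e2)) (h22 : degLE g2 (d2 - e2))
    (hc : c ≠ 0) (hdet : f1 * g2 - g1 * f2 = Polynomial.C c)
    (hcov : ∀ j, j ≠ i0 → l j = fiber f1 g1 (t j) ∨ l j = fiber f2 g2 (t j))
    (hi1 : l i0 ≠ fiber f1 g1 (t i0)) (hi2 : l i0 ≠ fiber f2 g2 (t i0)) :
    ∃ w : Fin n → ℝ, (∀ i, w i ∈ Set.Icc (0:ℝ) 1) ∧
      ∀ F : LineSub d1 d2, 0 < Stab d1 d2 t l w F := by
  have hdetz : ∀ z : ℂ, f1.eval z * g2.eval z - g1.eval z * f2.eval z = c := by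
    intro z
    have := congrArg (Polynomial.eval z) hdet
    simpa using this
  obtain ⟨x, hx, hlx⟩ := exists_gen (l i0) (hl i0)
  set A := (Finset.univ : Finset (Fin n)).filter (fun j => l j = fiber f1 g1 (t j)) with hA
  set B := (Finset.univ : Finset (Fin n)).filter (fun j => l j = fiber f2 g2 (t j)) with hB
  have hABfib : ∀ j : Fin n, fiber f1 g1 (t j) ≠ fiber f2 g2 (t j) := fun j =>
    fiber_ne_fiber (by rw [hdetz (t j)]; exact hc)
  have hdisj : Disjoint A B := by
    rw [Finset.disjoint_left]
    intro j hjA hjB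
    rw [hA, Finset.mem_filter] at hjA
    rw [hB, Finset.mem_filter] at hjB
    exact hABfib j (hjA.2 ▸ hjB.2)
  have hi0A : i0 ∉ A := fun h => hi1 (by simpa [hA] using h)
  have hi0B : i0 ∉ B := fun h => hi2 (by simpa [hB] using h)
  have hi0AB : i0 ∉ A ∪ B := by simp [hi0A, hi0B]
  have hUniv : (Finset.univ : Finset (Fin n)) = insert i0 (A ∪ B) := by
    ext j
    simp only [Finset.mem_univ, true_iff, Finset.mem_insert, Finset.mem_union]
    by_cases hj : j = i0
    · exact Or.inl hj
    · rcases hcov j hj with h | h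
      · exact Or.inr (Or.inl (by simp [hA, h]))
      · exact Or.inr (Or.inr (by simp [hB, h]))
  have hD1 : (e2 - e1) + 1 ≤ (A.card : ℤ) := by
    by_contra hcon
    push_neg at hcon
    exact hund (decomposable_of_small d1 d2 t ht l i0 x hx hlx e1 e2 f1 g1 f2 g2 c he
      h11 h12 h21 h22 hc hdet hcov hi1 hi2 (by rw [← hA]; omega))
  have hD2 : (e1 - e2) + 1 ≤ (B.card : ℤ) := by
    by_contra hcon
    push_neg at hcon
    apply hund
    apply decomposable_of_small d1 d2 t ht l i0 x hx hlx e2 e1 f2 g2 f1 g1 (-c)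
      (by omega) h21 h22 h11 h12 (neg_ne_zero.mpr hc) ?_
      (fun j hj => Or.symm (hcov j hj)) hi2 hi1 (by rw [← hB]; omega)
    rw [map_neg, ← hdet]; ring
  have hPQ : ((e2 - e1 : ℤ) : ℝ) + 1 ≤ (A.card : ℝ) := by exact_mod_cast hD1
  have hRQ : 1 - ((e2 - e1 : ℤ) : ℝ) ≤ (B.card : ℝ) := by
    have h' : ((e1 - e2 : ℤ) : ℝ) + 1 ≤ (B.card : ℝ) := by exact_mod_cast hD2
    push_cast at h' ⊢
    linarith
  obtain ⟨u, v, hu0, hu1, hv0, hv1, H1, H2, H3⟩ :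
      ∃ u v : ℝ, 0 ≤ u ∧ u ≤ 1 ∧ 0 ≤ v ∧ v ≤ 1 ∧
        (1/2 ≤ ((e2 - e1 : ℤ) : ℝ) + ((B.card : ℝ) * v + 1/2 - (A.card : ℝ) * u)) ∧
        (1/2 ≤ -((e2 - e1 : ℤ) : ℝ) + ((A.card : ℝ) * u + 1/2 - (B.card : ℝ) * v)) ∧
        (∀ a1 a2 sA sB : ℝ, 0 ≤ a1 → 0 ≤ a2 → a2 - a1 = ((e2 - e1 : ℤ) : ℝ) →
          0 ≤ sA → sA ≤ a2 → sA ≤ (A.card : ℝ) → 0 ≤ sB → sB ≤ a1 → sB ≤ (B.card : ℝ) →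
          1/2 < (a1 + a2) + u * ((A.card : ℝ) - 2*sA) + v * ((B.card : ℝ) - 2*sB)) := by
    set Q : ℝ := ((e2 - e1 : ℤ) : ℝ) with hQ
    set P : ℝ := (A.card : ℝ) with hP
    set R : ℝ := (B.card : ℝ) with hR
    have hP0 : (0:ℝ) ≤ P := Nat.cast_nonneg _
    have hR0 : (0:ℝ) ≤ R := Nat.cast_nonneg _
    by_cases hq1 : 1 ≤ e2 - e1
    · have hQ1 : (1:ℝ) ≤ Q := by rw [hQ]; exact_mod_cast hq1
      have hPpos : (0:ℝ) < P := by linarith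
      refine ⟨Q/P, 0, div_nonneg (by linarith) hP0, ?_, le_refl 0, zero_le_one, ?_, ?_, ?_⟩
      · rw [div_le_one hPpos]; linarith
      · rw [mul_comm P (Q/P), div_mul_cancel₀ _ (ne_of_gt hPpos)]; linarith
      · rw [mul_comm P (Q/P), div_mul_cancel₀ _ (ne_of_gt hPpos)]; linarith
      · intro a1 a2 sA sB ha1 ha2 haq hsA0 hsA2 hsAP hsB0 hsB1 hsBR
        rw [zero_mul, add_zero, ← mul_lt_mul_iff_left₀ hPpos]
        have hexp : ((a1 + a2) + Q/P * (P - 2*sA)) * P = (a1 + a2)*P + Q*(P - 2*sA) := by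
          field_simp
        rw [hexp]
        nlinarith [mul_nonneg (by linarith : (0:ℝ) ≤ P - Q - 1)
            (by linarith : (0:ℝ) ≤ a1 + Q - sA),
          mul_nonneg (by linarith : (0:ℝ) ≤ P - Q - 1) (by linarith : (0:ℝ) ≤ Q - 1),
          mul_nonneg ha1 (by linarith : (0:ℝ) ≤ Q - 1),
          mul_nonneg ha1 (by linarith : (0:ℝ) ≤ P - Q)]
    · by_cases hq2 : e2 - e1 ≤ -1
      · have hQ1 : Q ≤ -1 := by rw [hQ]; exact_mod_cast hq2
        have hRpos : (0:ℝ) < R := by linarith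
        refine ⟨0, -Q/R, le_refl 0, zero_le_one, div_nonneg (by linarith) hR0, ?_, ?_, ?_, ?_⟩
        · rw [div_le_one hRpos]; linarith
        · rw [mul_comm R (-Q/R), div_mul_cancel₀ _ (ne_of_gt hRpos)]; linarith
        · rw [mul_comm R (-Q/R), div_mul_cancel₀ _ (ne_of_gt hRpos)]; linarith
        · intro a1 a2 sA sB ha1 ha2 haq hsA0 hsA2 hsAP hsB0 hsB1 hsBR
          rw [zero_mul, add_zero, ← mul_lt_mul_iff_left₀ hRpos]
          have hexp : ((a1 + a2) + -Q/R * (R - 2*sB)) * R = (a1 + a2)*R + (-Q)*(R - 2*sB) := by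
            field_simp
          rw [hexp]
          nlinarith [mul_nonneg (by linarith : (0:ℝ) ≤ R + Q - 1)
              (by linarith : (0:ℝ) ≤ a2 - Q - sB),
            mul_nonneg (by linarith : (0:ℝ) ≤ R + Q - 1) (by linarith : (0:ℝ) ≤ -Q - 1),
            mul_nonneg ha2 (by linarith : (0:ℝ) ≤ -Q - 1),
            mul_nonneg ha2 (by linarith : (0:ℝ) ≤ R + Q)]
      · have hQ0 : Q = 0 := by
          rw [hQ]
          have h0 : e2 - e1 = 0 := by omega
          rw [h0]; simp
        have hPpos : (0:ℝ) < P := by rw [hQ0] at hPQ; linarith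
        have hRpos : (0:ℝ) < R := by rw [hQ0] at hRQ; linarith
        have hP1 : (1:ℝ) ≤ P := by rw [hQ0] at hPQ; linarith
        have hR1 : (1:ℝ) ≤ R := by rw [hQ0] at hRQ; linarith
        have huP : P * (1/(2*P)) = 1/2 := by
          field_simp
        have hvR : R * (1/(2*R)) = 1/2 := by
          field_simp
        refine ⟨1/(2*P), 1/(2*R), div_nonneg zero_le_one (by linarith), ?_, div_nonneg zero_le_one (by linarith), ?_, ?_, ?_, ?_⟩
        · rw [div_le_one (by linarith)]; linarith
        · rw [div_le_one (by linarith)]; linarith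
        · rw [huP, hvR, hQ0]; linarith
        · rw [huP, hvR, hQ0]; linarith
        · intro a1 a2 sA sB ha1 ha2 haq hsA0 hsA2 hsAP hsB0 hsB1 hsBR
          rw [hQ0] at haq
          have eA : 1/(2*P) * (P - 2*sA) = 1/2 - sA/P := by
            field_simp
          have eB : 1/(2*R) * (R - 2*sB) = 1/2 - sB/R := by
            field_simp
          rw [eA, eB]
          have dA : sA/P ≤ sA := div_le_self hsA0 hP1
          have dB : sB/R ≤ sB := div_le_self hsB0 hR1
          linarith
  set w : Fin n → ℝ := fun j =>
    if l j = fiber f1 g1 (t j) then u else if l j = fiber f2 g2 (t j) then v else 1/2 with hw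
  have hwA : ∀ j ∈ A, w j = u := by
    intro j hj
    rw [hA, Finset.mem_filter] at hj
    simp only [hw]
    rw [if_pos hj.2]
  have hwB : ∀ j ∈ B, w j = v := by
    intro j hj
    rw [hB, Finset.mem_filter] at hj
    simp only [hw]
    rw [if_neg (fun h => hABfib j (h.symm.trans hj.2)), if_pos hj.2]
  have hwi0 : w i0 = 1/2 := by
    simp only [hw]
    rw [if_neg hi1, if_neg hi2]
  refine ⟨w, ?_, ?_⟩
  · intro j
    simp only [hw]
    constructor
    · split_ifs <;> first | exact hu0 | exact hv0 | norm_num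
    · split_ifs <;> first | exact hu1 | exact hv1 | norm_num
  · rintro ⟨m, p1, p2, hp1, hp2, hnz, hsat⟩
    simp only [Stab]
    set α : Polynomial ℂ := p1 * g2 - p2 * f2 with hα
    set β : Polynomial ℂ := p2 * f1 - p1 * g1 with hβ2
    have hαd : degLE α (e1 - m) := by
      apply degLE_sub
      · exact degLE_mono (degLE_mul hp1 h22) (by omega)
      · exact degLE_mono (degLE_mul hp2 h21) (by omega)
    have hβd : degLE β (e2 - m) := by
      apply degLE_sub
      · exact degLE_mono (degLE_mul hp2 h11) (by omega)
      · exact degLE_mono (degLE_mul hp1 h12) (by omega)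
    have hev1 : ∀ z : ℂ, p1.eval z * c = α.eval z * f1.eval z + β.eval z * f2.eval z := by
      intro z
      have hz := hdetz z
      simp only [hα, hβ2, Polynomial.eval_sub, Polynomial.eval_mul]
      linear_combination (-(p1.eval z)) * hz
    have hev2 : ∀ z : ℂ, p2.eval z * c = α.eval z * g1.eval z + β.eval z * g2.eval z := by
      intro z
      have hz := hdetz z
      simp only [hα, hβ2, Polynomial.eval_sub, Polynomial.eval_mul]
      linear_combination (-(p2.eval z)) * hz
    have hnzαβ : ∀ z : ℂ, α.eval z = 0 → β.eval z = 0 → False := by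
      intro z ha hb
      rcases hnz z with h | h
      · apply h
        have h1 := hev1 z
        rw [ha, hb, zero_mul, zero_mul, add_zero] at h1
        rcases mul_eq_zero.mp h1 with h' | h'
        · exact h'
        · exact absurd h' hc
      · apply h
        have h1 := hev2 z
        rw [ha, hb, zero_mul, zero_mul, add_zero] at h1
        rcases mul_eq_zero.mp h1 with h' | h'
        · exact h'
        · exact absurd h' hc
    have honA : ∀ j ∈ A, l j = fiber p1 p2 (t j) → β.eval (t j) = 0 := by
      intro j hjA hon
      rw [hA, Finset.mem_filter] at hjA
      have hEq : Submodule.span ℂ {![p1.eval (t j), p2.eval (t j)]} =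
          Submodule.span ℂ {![f1.eval (t j), g1.eval (t j)]} := by
        have h' := hon.symm.trans hjA.2
        simpa [fiber] using h'
      obtain ⟨a, ha⟩ := exists_smul_of_span_eq hEq
      have c0 : p1.eval (t j) = a * f1.eval (t j) := by
        have := congrFun ha 0; simpa using this
      have c1 : p2.eval (t j) = a * g1.eval (t j) := by
        have := congrFun ha 1; simpa using this
      simp only [hβ2, Polynomial.eval_sub, Polynomial.eval_mul, c0, c1]
      ring
    have honB : ∀ j ∈ B, l j = fiber p1 p2 (t j) → α.eval (t j) = 0 := by
      intro j hjB hon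
      rw [hB, Finset.mem_filter] at hjB
      have hEq : Submodule.span ℂ {![p1.eval (t j), p2.eval (t j)]} =
          Submodule.span ℂ {![f2.eval (t j), g2.eval (t j)]} := by
        have h' := hon.symm.trans hjB.2
        simpa [fiber] using h'
      obtain ⟨a, ha⟩ := exists_smul_of_span_eq hEq
      have c0 : p1.eval (t j) = a * f2.eval (t j) := by
        have := congrFun ha 0; simpa using this
      have c1 : p2.eval (t j) = a * g2.eval (t j) := by
        have := congrFun ha 1; simpa using this
      simp only [hα, Polynomial.eval_sub, Polynomial.eval_mul, c0, c1]
      ring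
    by_cases hβ0 : β = 0
    · have haz : ∀ z : ℂ, α.eval z ≠ 0 := by
        intro z h0
        exact hnzαβ z h0 (by rw [hβ0]; simp)
      have hα0 : α ≠ 0 := by
        intro h0
        exact haz 0 (by rw [h0]; simp)
      have hfib : ∀ z, fiber p1 p2 z = fiber f1 g1 z := by
        intro z
        have hb0 : β.eval z = 0 := by rw [hβ0]; simp
        have h1 := hev1 z; rw [hb0, zero_mul, add_zero] at h1
        have h2 := hev2 z; rw [hb0, zero_mul, add_zero] at h2
        have hvec : ![p1.eval z, p2.eval z] = (α.eval z / c) • ![f1.eval z, g1.eval z] := by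
          funext i
          fin_cases i
          · simp only [Fin.zero_eta, Matrix.cons_val_zero, Pi.smul_apply, smul_eq_mul]
            field_simp
            linear_combination h1
          · simp only [Fin.mk_one, Matrix.cons_val_one, Matrix.head_cons, Matrix.cons_val_zero, Pi.smul_apply, smul_eq_mul]
            field_simp
            linear_combination h2
        simp only [fiber]
        rw [hvec, span_smul_eq (div_ne_zero (haz z) hc)]
      have honiff : ∀ j, (l j = fiber p1 p2 (t j)) ↔ j ∈ A := by
        intro j
        rw [hfib (t j), hA]
        simp
      have hme1 : m ≤ e1 := by
        have h0 := degLE_natDegree hαd hα0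
        omega
      rw [hUniv, Finset.sum_insert hi0AB, Finset.sum_union hdisj]
      have s0 : (if l i0 = fiber p1 p2 (t i0) then -(w i0) else w i0) = 1/2 := by
        rw [if_neg (fun h => hi0A ((honiff i0).mp h)), hwi0]
      have sAe : ∑ j ∈ A, (if l j = fiber p1 p2 (t j) then -(w j) else w j)
          = (A.card : ℝ) * (-u) := by
        have h1 : ∀ j ∈ A, (if l j = fiber p1 p2 (t j) then -(w j) else w j) = -u := by
          intro j hj
          rw [if_pos ((honiff j).mpr hj), hwA j hj]
        rw [Finset.sum_congr rfl h1, Finset.sum_const, nsmul_eq_mul]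
      have sBe : ∑ j ∈ B, (if l j = fiber p1 p2 (t j) then -(w j) else w j)
          = (B.card : ℝ) * v := by
        have h1 : ∀ j ∈ B, (if l j = fiber p1 p2 (t j) then -(w j) else w j) = v := by
          intro j hj
          rw [if_neg (fun h => Finset.disjoint_left.mp hdisj ((honiff j).mp h) hj), hwB j hj]
        rw [Finset.sum_congr rfl h1, Finset.sum_const, nsmul_eq_mul]
      rw [s0, sAe, sBe]
      have hcast : ((e2 - e1 : ℤ) : ℝ) ≤ ((d1 + d2 : ℤ) : ℝ) - 2 * (m : ℝ) := by
        have hm' : (m:ℝ) ≤ (e1:ℝ) := by exact_mod_cast hme1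
        have hhe : (e1:ℝ) + (e2:ℝ) = (d1:ℝ) + (d2:ℝ) := by exact_mod_cast he
        push_cast
        linarith
      linarith
    · by_cases hα0 : α = 0
      · have hbz : ∀ z : ℂ, β.eval z ≠ 0 := by
          intro z h0
          exact hnzαβ z (by rw [hα0]; simp) h0
        have hfib : ∀ z, fiber p1 p2 z = fiber f2 g2 z := by
          intro z
          have ha0 : α.eval z = 0 := by rw [hα0]; simp
          have h1 := hev1 z; rw [ha0, zero_mul, zero_add] at h1
          have h2 := hev2 z; rw [ha0, zero_mul, zero_add] at h2
          have hvec : ![p1.eval z, p2.eval z] = (β.eval z / c) • ![f2.eval z, g2.eval z] := by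
            funext i
            fin_cases i
            · simp only [Fin.zero_eta, Matrix.cons_val_zero, Pi.smul_apply, smul_eq_mul]
              field_simp
              linear_combination h1
            · simp only [Fin.mk_one, Matrix.cons_val_one, Matrix.head_cons, Matrix.cons_val_zero, Pi.smul_apply, smul_eq_mul]
              field_simp
              linear_combination h2
          simp only [fiber]
          rw [hvec, span_smul_eq (div_ne_zero (hbz z) hc)]
        have honiff : ∀ j, (l j = fiber p1 p2 (t j)) ↔ j ∈ B := by
          intro j
          rw [hfib (t j), hB]
          simp
        have hme2 : m ≤ e2 := by
          have h0 := degLE_natDegree hβd hβ0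
          omega
        rw [hUniv, Finset.sum_insert hi0AB, Finset.sum_union hdisj]
        have s0 : (if l i0 = fiber p1 p2 (t i0) then -(w i0) else w i0) = 1/2 := by
          rw [if_neg (fun h => hi0B ((honiff i0).mp h)), hwi0]
        have sAe : ∑ j ∈ A, (if l j = fiber p1 p2 (t j) then -(w j) else w j)
            = (A.card : ℝ) * u := by
          have h1 : ∀ j ∈ A, (if l j = fiber p1 p2 (t j) then -(w j) else w j) = u := by
            intro j hj
            rw [if_neg (fun h => Finset.disjoint_right.mp hdisj ((honiff j).mp h) hj), hwA j hj]
          rw [Finset.sum_congr rfl h1, Finset.sum_const, nsmul_eq_mul]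
        have sBe : ∑ j ∈ B, (if l j = fiber p1 p2 (t j) then -(w j) else w j)
            = (B.card : ℝ) * (-v) := by
          have h1 : ∀ j ∈ B, (if l j = fiber p1 p2 (t j) then -(w j) else w j) = -v := by
            intro j hj
            rw [if_pos ((honiff j).mpr hj), hwB j hj]
          rw [Finset.sum_congr rfl h1, Finset.sum_const, nsmul_eq_mul]
        rw [s0, sAe, sBe]
        have hcast : -((e2 - e1 : ℤ) : ℝ) ≤ ((d1 + d2 : ℤ) : ℝ) - 2 * (m : ℝ) := by
          have hm' : (m:ℝ) ≤ (e2:ℝ) := by exact_mod_cast hme2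
          have hhe : (e1:ℝ) + (e2:ℝ) = (d1:ℝ) + (d2:ℝ) := by exact_mod_cast he
          push_cast
          linarith
        linarith
      · set SA := A.filter (fun j => l j = fiber p1 p2 (t j)) with hSA
        set SB := B.filter (fun j => l j = fiber p1 p2 (t j)) with hSB
        have hsa2 : (SA.card : ℤ) ≤ e2 - m := by
          apply card_filter_le_deg ht SA hβd hβ0
          intro j hj
          rw [hSA, Finset.mem_filter] at hj
          exact honA j hj.1 hj.2
        have hsb1 : (SB.card : ℤ) ≤ e1 - m := by
          apply card_filter_le_deg ht SB hαd hα0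
          intro j hj
          rw [hSB, Finset.mem_filter] at hj
          exact honB j hj.1 hj.2
        have hsaP : SA.card ≤ A.card := Finset.card_le_card (hSA ▸ Finset.filter_subset _ _)
        have hsbR : SB.card ≤ B.card := Finset.card_le_card (hSB ▸ Finset.filter_subset _ _)
        have ha1 : (0:ℤ) ≤ e1 - m := by
          have h0 := degLE_natDegree hαd hα0
          omega
        have ha2 : (0:ℤ) ≤ e2 - m := by
          have h0 := degLE_natDegree hβd hβ0
          omega
        rw [hUniv, Finset.sum_insert hi0AB, Finset.sum_union hdisj]
        have s0 : -(1/2 : ℝ) ≤ (if l i0 = fiber p1 p2 (t i0) then -(w i0) else w i0) := by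
          split_ifs <;> rw [hwi0] <;> norm_num
        have sAe : ∑ j ∈ A, (if l j = fiber p1 p2 (t j) then -(w j) else w j)
            = u * ((A.card : ℝ) - 2 * (SA.card : ℝ)) := by
          have h1 : ∀ j ∈ A, (if l j = fiber p1 p2 (t j) then -(w j) else w j)
              = u - 2 * u * (if l j = fiber p1 p2 (t j) then (1:ℝ) else 0) := by
            intro j hj
            split_ifs with h
            · rw [hwA j hj]; ring
            · rw [hwA j hj]; ring
          rw [Finset.sum_congr rfl h1, Finset.sum_sub_distrib, Finset.sum_const,
            nsmul_eq_mul, ← Finset.mul_sum, Finset.sum_boole, ← hSA]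
          ring
        have sBe : ∑ j ∈ B, (if l j = fiber p1 p2 (t j) then -(w j) else w j)
            = v * ((B.card : ℝ) - 2 * (SB.card : ℝ)) := by
          have h1 : ∀ j ∈ B, (if l j = fiber p1 p2 (t j) then -(w j) else w j)
              = v - 2 * v * (if l j = fiber p1 p2 (t j) then (1:ℝ) else 0) := by
            intro j hj
            split_ifs with h
            · rw [hwB j hj]; ring
            · rw [hwB j hj]; ring
          rw [Finset.sum_congr rfl h1, Finset.sum_sub_distrib, Finset.sum_const,
            nsmul_eq_mul, ← Finset.mul_sum, Finset.sum_boole, ← hSB]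
          ring
        rw [sAe, sBe]
        have hH := H3 (((e1 - m : ℤ)) : ℝ) (((e2 - m : ℤ)) : ℝ) (SA.card : ℝ) (SB.card : ℝ)
          (by exact_mod_cast ha1) (by exact_mod_cast ha2) (by push_cast; ring)
          (Nat.cast_nonneg _) (by exact_mod_cast hsa2) (by exact_mod_cast hsaP)
          (Nat.cast_nonneg _) (by exact_mod_cast hsb1) (by exact_mod_cast hsbR)
        have hdm : ((d1 + d2 : ℤ):ℝ) - 2*(m:ℝ) = ((e1 - m : ℤ):ℝ) + ((e2 - m : ℤ):ℝ) := by
          have hhe : (e1:ℝ) + (e2:ℝ) = (d1:ℝ) + (d2:ℝ) := by exact_mod_cast he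
          push_cast
          linarith
        linarith

theorem stmt2_aux : ∀ (n : ℕ) (d1 d2 : ℤ) (t : Fin n → ℂ), Function.Injective t →
    ∀ (l : Fin n → Submodule ℂ (Fin 2 → ℂ)), (∀ i, Module.finrank ℂ (l i) = 1) →
    ¬ Decomposable d1 d2 t l →
    ∃ w : Fin n → ℝ, (∀ i, w i ∈ Set.Icc (0 : ℝ) 1) ∧
      ∀ F : LineSub d1 d2, 0 < Stab d1 d2 t l w F := by
  intro n
  induction n with
  | zero =>
      intro d1 d2 t ht l hl hund
      exfalso
      apply hund
      refine ⟨d1, d2, 1, 0, 0, 1, by ring, ?_, degLE_zero _, degLE_zero _, ?_,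
        ⟨1, one_ne_zero, by simp⟩, fun i => i.elim0⟩
      · intro k hk
        rw [Polynomial.coeff_one, if_neg (by omega)]
      · intro k hk
        rw [Polynomial.coeff_one, if_neg (by omega)]
  | succ n ih =>
      intro d1 d2 t ht l hl hund
      by_cases hD : Decomposable d1 d2 (t ∘ (0:Fin (n+1)).succAbove)
          (l ∘ (0:Fin (n+1)).succAbove)
      · obtain ⟨e1, e2, f1, g1, f2, g2, he, h11, h12, h21, h22, ⟨c, hc, hdet⟩, hcov⟩ := hD
        have hcov' : ∀ j, j ≠ (0:Fin (n+1)) →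
            l j = fiber f1 g1 (t j) ∨ l j = fiber f2 g2 (t j) := by
          intro j hj
          obtain ⟨k, hk⟩ := Fin.exists_succAbove_eq hj
          have h' := hcov k
          rw [← hk]
          simpa using h'
        by_cases hi1 : l 0 = fiber f1 g1 (t 0)
        · exfalso
          apply hund
          refine ⟨e1, e2, f1, g1, f2, g2, he, h11, h12, h21, h22, ⟨c, hc, hdet⟩, fun j => ?_⟩
          by_cases hj : j = 0
          · subst hj; exact Or.inl hi1
          · exact hcov' j hj
        by_cases hi2 : l 0 = fiber f2 g2 (t 0)
        · exfalso
          apply hund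
          refine ⟨e1, e2, f1, g1, f2, g2, he, h11, h12, h21, h22, ⟨c, hc, hdet⟩, fun j => ?_⟩
          by_cases hj : j = 0
          · subst hj; exact Or.inr hi2
          · exact hcov' j hj
        · exact main_stab d1 d2 t ht l hl hund 0 e1 e2 f1 g1 f2 g2 c he
            h11 h12 h21 h22 hc hdet hcov' hi1 hi2
      · have ht' : Function.Injective (t ∘ (0:Fin (n+1)).succAbove) :=
          ht.comp Fin.succAbove_right_injective
        obtain ⟨w', hw'1, hw'2⟩ := ih d1 d2 _ ht' _ (fun i => hl _) hD
        set W : Fin (n+1) → ℝ := (0:Fin (n+1)).insertNth (0:ℝ) w' with hW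
        have hW0 : W 0 = 0 := by
          rw [hW]; exact Fin.insertNth_apply_same _ _ _
        have hWs : ∀ k : Fin n, W ((0:Fin (n+1)).succAbove k) = w' k := by
          intro k
          rw [hW]; exact Fin.insertNth_apply_succAbove _ _ _ _
        refine ⟨W, ?_, ?_⟩
        · intro j
          by_cases hj : j = 0
          · subst hj
            rw [hW0]
            exact ⟨le_refl 0, zero_le_one⟩
          · obtain ⟨k, hk⟩ := Fin.exists_succAbove_eq hj
            rw [← hk, hWs k]
            exact hw'1 k
        · intro F
          have hs := hw'2 F
          have hEq : Stab d1 d2 t l W F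
              = Stab d1 d2 (t ∘ (0:Fin (n+1)).succAbove) (l ∘ (0:Fin (n+1)).succAbove) w' F := by
            simp only [Stab]
            congr 1
            rw [Fin.sum_univ_succAbove (fun j => if l j = fiber F.f F.g (t j)
              then -(W j) else W j) (0:Fin (n+1))]
            have h0 : (if l 0 = fiber F.f F.g (t 0) then -(W 0) else W 0) = 0 := by
              rw [hW0]
              split_ifs <;> simp
            rw [h0, zero_add]
            apply Finset.sum_congr rfl
            intro k _
            rw [hWs k]
            rfl
          rw [hEq]
          exact hs


end AuxStmt2

/-- an undecomposable quasi-parabolic rank-2 bundle of degree `d`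
over `P¹` with `n` marked points is `w`-stable for some choice of weights
`w ∈ [0,1]ⁿ`. -/
theorem stmt2 (n : ℕ) (d1 d2 : ℤ) (t : Fin n → ℂ) (ht : Function.Injective t)
    (l : Fin n → Submodule ℂ (Fin 2 → ℂ))
    (hl : ∀ i, Module.finrank ℂ (l i) = 1)
    (hund : ¬ Decomposable d1 d2 t l) :
    ∃ w : Fin n → ℝ, (∀ i, w i ∈ Set.Icc (0 : ℝ) 1) ∧
      ∀ F : LineSub d1 d2, 0 < Stab d1 d2 t l w F :=
  stmt2_aux n d1 d2 t ht l hl hund
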